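/- For q = 2^k and 0 ≤ m < q, the Nim polynomial satisfies N_{q+m} = (x₁^q x₂^q + x₁^q x₃^q + x₂^q x₃^q) · N_m in ℤ[x₁,x₂,x₃]/⟨x₁x₂x₃ - 1⟩. -/

import Mathlib

open MvPolynomial

/-- The trivariate Nim polynomial `N_m`: the sum of the monomials `x₁^a x₂^b x₃^c` over
all nonnegative integers `a, b, c` with `a + b + c = 2m` and Nim-sum `a ⊕ b ⊕ c = 0`. -/
noncomputable def nimPoly (m : ℕ) : MvPolynomial (Fin 3) ℤ :=
  ∑ t ∈ (Finset.range (2 * m + 1) ×ˢ Finset.range (2 * m + 1) ×ˢ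
      Finset.range (2 * m + 1)).filter
      (fun t => t.1 + t.2.1 + t.2.2 = 2 * m ∧ t.1 ^^^ t.2.1 ^^^ t.2.2 = 0),
    X 0 ^ t.1 * X 1 ^ t.2.1 * X 2 ^ t.2.2

/-- The relation ideal `⟨x₁x₂x₃ - 1⟩` defining `A = ℤ[x₁,x₂,x₃]/⟨x₁x₂x₃-1⟩`. -/
noncomputable def nimRel : Ideal (MvPolynomial (Fin 3) ℤ) :=
  Ideal.span {X 0 * X 1 * X 2 - 1}

/-- For `q = 2^k` and `0 ≤ m < q`, the Nim polynomial satisfies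
`N_{q+m} = (x₁^q x₂^q + x₁^q x₃^q + x₂^q x₃^q) · N_m` in `ℤ[x₁,x₂,x₃]/⟨x₁x₂x₃-1⟩`. -/

private lemma and_mod_two (a b : ℕ) : (a &&& b) % 2 = a % 2 * (b % 2) := by
  have h := Nat.testBit_and a b 0
  simp only [Nat.testBit_zero] at h
  rcases Nat.mod_two_eq_zero_or_one a with h1 | h1 <;>
    rcases Nat.mod_two_eq_zero_or_one b with h2 | h2 <;>
    rcases Nat.mod_two_eq_zero_or_one (a &&& b) with h3 | h3 <;>
    simp [h1, h2, h3] at h ⊢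

private lemma add_eq_xor (a b : ℕ) : a + b = (a ^^^ b) + 2 * (a &&& b) := by
  have key : ∀ n a b : ℕ, a + b ≤ n → a + b = (a ^^^ b) + 2 * (a &&& b) := by
    intro n
    induction n with
    | zero => intro a b h
              have : a = 0 ∧ b = 0 := by omega
              simp [this.1, this.2]
    | succ n ih =>
      intro a b h
      rcases Nat.eq_zero_or_pos (a + b) with h0 | h0
      · have : a = 0 ∧ b = 0 := by omega
        simp [this.1, this.2]
      · have ih2 := ih (a / 2) (b / 2) (by omega)
        have hxd : (a ^^^ b) / 2 = a / 2 ^^^ b / 2 := Nat.xor_div_two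
        have had : (a &&& b) / 2 = a / 2 &&& b / 2 := Nat.and_div_two
        have hxm : (a ^^^ b) % 2 = (a + b) % 2 := Nat.xor_mod_two_eq
        have ham : (a &&& b) % 2 = a % 2 * (b % 2) := and_mod_two a b
        have e1 : a = 2 * (a / 2) + a % 2 := (Nat.div_add_mod a 2).symm ▸ by omega
        have e2 : b = 2 * (b / 2) + b % 2 := by omega
        have e3 : (a ^^^ b) = 2 * ((a/2) ^^^ (b/2)) + (a + b) % 2 := by
          rw [← hxd, ← hxm]; omega
        have e4 : (a &&& b) = 2 * ((a/2) &&& (b/2)) + a % 2 * (b % 2) := by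
          rw [← had, ← ham]; omega
        rcases Nat.mod_two_eq_zero_or_one a with h1 | h1 <;>
          rcases Nat.mod_two_eq_zero_or_one b with h2 | h2 <;>
          simp [h1, h2, Nat.add_mod a b 2] at e3 e4 <;> omega
  exact key (a + b) a b le_rfl

private lemma xor_le_add (a b : ℕ) : a ^^^ b ≤ a + b := by
  rw [add_eq_xor a b]; omega

private lemma add_pow_eq_xor {k a : ℕ} (h : a < 2 ^ k) : a + 2 ^ k = a ^^^ 2 ^ k := by
  have hand : a &&& 2 ^ k = 0 := by
    apply Nat.eq_of_testBit_eq
    intro i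
    simp only [Nat.testBit_and, Nat.zero_testBit, Nat.testBit_two_pow]
    rcases eq_or_ne k i with rfl | hne
    · simp [Nat.testBit_lt_two_pow h]
    · simp [hne]
  have := add_eq_xor a (2 ^ k)
  omega

private lemma testBit_true_of_ge {k a : ℕ} (h1 : 2 ^ k ≤ a) (h2 : a < 2 ^ (k + 1)) :
    a.testBit k = true := by
  have hs : a = (a - 2 ^ k) + 2 ^ k := by omega
  have hlt : a - 2 ^ k < 2 ^ k := by
    have : 2 ^ (k+1) = 2 ^ k + 2 ^ k := by ring
    omega
  rw [hs, add_pow_eq_xor hlt, Nat.testBit_xor, Nat.testBit_two_pow_self,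
    Nat.testBit_lt_two_pow hlt]
  rfl

private lemma xor_shift (a b c q : ℕ) : a ^^^ (b ^^^ q) ^^^ (c ^^^ q) = a ^^^ b ^^^ c := by
  apply Nat.eq_of_testBit_eq
  intro i
  simp only [Nat.testBit_xor]
  cases a.testBit i <;> cases b.testBit i <;> cases c.testBit i <;> cases q.testBit i <;> rfl

private lemma bound_of_xor {a b c n : ℕ} (hx : a ^^^ b ^^^ c = 0) (hs : a + b + c = 2 * n) :
    a ≤ n ∧ b ≤ n ∧ c ≤ n := by
  have hc : a ^^^ b = c := Nat.xor_eq_zero_iff.mp hx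
  subst hc
  have h1 : a ^^^ b ≤ a + b := xor_le_add a b
  have e2 : b ^^^ (a ^^^ b) = a := by rw [Nat.xor_comm a b, xor_cancel_left]
  have h2 : a ≤ b + (a ^^^ b) := le_of_eq e2.symm |>.trans (xor_le_add b (a ^^^ b))
  have e3 : a ^^^ (a ^^^ b) = b := xor_cancel_left a b
  have h3 : b ≤ a + (a ^^^ b) := le_of_eq e3.symm |>.trans (xor_le_add a (a ^^^ b))
  omega

private lemma sum_eq_two_or {a b c : ℕ} (hx : a ^^^ b ^^^ c = 0) :
    a + b + c = 2 * ((a ^^^ b) + (a &&& b)) := by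
  have hc : a ^^^ b = c := by
    have := Nat.xor_eq_zero_iff.mp hx
    omega
  have := add_eq_xor a b
  omega

private lemma decomp {k m a b c : ℕ} (hm : m < 2 ^ k) (hs : a + b + c = 2 * (2 ^ k + m))
    (hx : a ^^^ b ^^^ c = 0) (ha : a < 2 ^ k) :
    2 ^ k ≤ b ∧ 2 ^ k ≤ c ∧ a + (b - 2 ^ k) + (c - 2 ^ k) = 2 * m ∧
      a ^^^ (b - 2 ^ k) ^^^ (c - 2 ^ k) = 0 := by
  obtain ⟨hba, hbb, hbc⟩ := bound_of_xor hx hs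
  have hw := sum_eq_two_or hx
  have hweq : (a ^^^ b) + (a &&& b) = 2 ^ k + m := by omega
  have dand : (a ^^^ b) &&& (a &&& b) = 0 := by
    apply Nat.eq_of_testBit_eq
    intro i
    simp only [Nat.testBit_and, Nat.testBit_xor, Nat.zero_testBit]
    cases a.testBit i <;> cases b.testBit i <;> rfl
  have hwxor : (a ^^^ b) + (a &&& b) = (a ^^^ b) ^^^ (a &&& b) := by
    have := add_eq_xor (a ^^^ b) (a &&& b)
    omega
  have hqm : (2 ^ k + m).testBit k = true := by
    rw [add_comm, add_pow_eq_xor hm, Nat.testBit_xor, Nat.testBit_two_pow_self,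
      Nat.testBit_lt_two_pow hm]
    rfl
  have hwbit : ((a ^^^ b) ^^^ (a &&& b)).testBit k = true := by
    rw [← hwxor, hweq]; exact hqm
  have hta : a.testBit k = false := Nat.testBit_lt_two_pow ha
  have htb : b.testBit k = true := by
    rw [Nat.testBit_xor, Nat.testBit_xor, Nat.testBit_and, hta] at hwbit
    cases h : b.testBit k <;> rw [h] at hwbit <;> simp at hwbit ⊢
  have hcab : a ^^^ b = c := Nat.xor_eq_zero_iff.mp hx
  have htc : c.testBit k = true := by
    rw [← hcab, Nat.testBit_xor, hta, htb]; rfl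
  have hqb : 2 ^ k ≤ b := Nat.ge_two_pow_of_testBit htb
  have hqc : 2 ^ k ≤ c := Nat.ge_two_pow_of_testBit htc
  refine ⟨hqb, hqc, by omega, ?_⟩
  have hb' : b = (b - 2 ^ k) ^^^ 2 ^ k := by
    have := add_pow_eq_xor (show b - 2 ^ k < 2 ^ k by omega)
    omega
  have hc' : c = (c - 2 ^ k) ^^^ 2 ^ k := by
    have := add_pow_eq_xor (show c - 2 ^ k < 2 ^ k by omega)
    omega
  have : a ^^^ (b - 2 ^ k) ^^^ (c - 2 ^ k) = a ^^^ b ^^^ c := by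
    conv_rhs => rw [hb', hc']
    exact (xor_shift a (b - 2 ^ k) (c - 2 ^ k) (2 ^ k)).symm
  rw [this, hx]

private lemma small3 {k m a b c : ℕ} (hm : m < 2 ^ k) (hs : a + b + c = 2 * (2 ^ k + m))
    (hx : a ^^^ b ^^^ c = 0) (haq : 2 ^ k ≤ a) (hbq : 2 ^ k ≤ b) : c < 2 ^ k := by
  obtain ⟨hba, hbb, hbc⟩ := bound_of_xor hx hs
  have h2 : 2 ^ (k + 1) = 2 * 2 ^ k := by ring
  have hta : a.testBit k = true := testBit_true_of_ge haq (by omega)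
  have htb : b.testBit k = true := testBit_true_of_ge hbq (by omega)
  have hcab : a ^^^ b = c := Nat.xor_eq_zero_iff.mp hx
  have htc : c.testBit k = false := by
    rw [← hcab, Nat.testBit_xor, hta, htb]; rfl
  by_contra h
  have : c.testBit k = true := testBit_true_of_ge (by omega) (by omega)
  rw [this] at htc
  simp at htc

private lemma comp {k m a b c : ℕ} (hm : m < 2 ^ k) (hs : a + b + c = 2 * m)
    (hx : a ^^^ b ^^^ c = 0) :
    a ≤ m ∧ b ≤ m ∧ c ≤ m ∧ a + (b + 2 ^ k) + (c + 2 ^ k) = 2 * (2 ^ k + m) ∧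
      a ^^^ (b + 2 ^ k) ^^^ (c + 2 ^ k) = 0 := by
  obtain ⟨hba, hbb, hbc⟩ := bound_of_xor hx hs
  have hb' : b + 2 ^ k = b ^^^ 2 ^ k := add_pow_eq_xor (by omega)
  have hc' : c + 2 ^ k = c ^^^ 2 ^ k := add_pow_eq_xor (by omega)
  refine ⟨hba, hbb, hbc, by omega, ?_⟩
  rw [hb', hc', xor_shift, hx]

private lemma xor_rot (a b c : ℕ) : c ^^^ a ^^^ b = a ^^^ b ^^^ c := by
  apply Nat.eq_of_testBit_eq
  intro i
  simp only [Nat.testBit_xor]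
  cases a.testBit i <;> cases b.testBit i <;> cases c.testBit i <;> rfl

private def T3 (n : ℕ) : Finset (ℕ × ℕ × ℕ) :=
  (Finset.range (2 * n + 1) ×ˢ Finset.range (2 * n + 1) ×ˢ Finset.range (2 * n + 1)).filter
    (fun t => t.1 + t.2.1 + t.2.2 = 2 * n ∧ t.1 ^^^ t.2.1 ^^^ t.2.2 = 0)

private lemma mem_T3 {n : ℕ} {t : ℕ × ℕ × ℕ} :
    t ∈ T3 n ↔ t.1 + t.2.1 + t.2.2 = 2 * n ∧ t.1 ^^^ t.2.1 ^^^ t.2.2 = 0 := by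
  unfold T3
  simp only [Finset.mem_filter, Finset.mem_product, Finset.mem_range]
  constructor
  · tauto
  · intro h
    exact ⟨⟨by omega, by omega, by omega⟩, h⟩

private lemma nimPoly_eq (n : ℕ) :
    nimPoly n = ∑ t ∈ T3 n, X 0 ^ t.1 * X 1 ^ t.2.1 * X 2 ^ t.2.2 := rfl

private lemma nim_mul (k m : ℕ) (hm : m < 2 ^ k) :
    nimPoly (2 ^ k + m) =
      (X 0 ^ (2 ^ k) * X 1 ^ (2 ^ k) + X 0 ^ (2 ^ k) * X 2 ^ (2 ^ k) +
        X 1 ^ (2 ^ k) * X 2 ^ (2 ^ k)) * nimPoly m := by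
  classical
  rw [nimPoly_eq, nimPoly_eq, Finset.mul_sum]
  have hexp : ∀ t : ℕ × ℕ × ℕ,
      (X 0 ^ (2 ^ k) * X 1 ^ (2 ^ k) + X 0 ^ (2 ^ k) * X 2 ^ (2 ^ k) +
        X 1 ^ (2 ^ k) * X 2 ^ (2 ^ k) : MvPolynomial (Fin 3) ℤ) *
          (X 0 ^ t.1 * X 1 ^ t.2.1 * X 2 ^ t.2.2) =
        X 0 ^ (t.1 + 2 ^ k) * X 1 ^ (t.2.1 + 2 ^ k) * X 2 ^ t.2.2 +
          (X 0 ^ (t.1 + 2 ^ k) * X 1 ^ t.2.1 * X 2 ^ (t.2.2 + 2 ^ k) +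
            X 0 ^ t.1 * X 1 ^ (t.2.1 + 2 ^ k) * X 2 ^ (t.2.2 + 2 ^ k)) := by
    intro t; ring
  rw [Finset.sum_congr rfl fun t _ => hexp t, Finset.sum_add_distrib, Finset.sum_add_distrib]
  have split1 := (Finset.sum_filter_add_sum_filter_not (T3 (2 ^ k + m))
    (fun t => t.1 < 2 ^ k) (fun t => X 0 ^ t.1 * X 1 ^ t.2.1 * X 2 ^ t.2.2 :
      ℕ × ℕ × ℕ → MvPolynomial (Fin 3) ℤ)).symm
  have split2 := (Finset.sum_filter_add_sum_filter_not
    ((T3 (2 ^ k + m)).filter (fun t => ¬ t.1 < 2 ^ k))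
    (fun t => t.2.1 < 2 ^ k) (fun t => X 0 ^ t.1 * X 1 ^ t.2.1 * X 2 ^ t.2.2 :
      ℕ × ℕ × ℕ → MvPolynomial (Fin 3) ℤ)).symm
  rw [split1, split2]
  have e0 : ∑ t ∈ (T3 (2 ^ k + m)).filter (fun t => t.1 < 2 ^ k),
        (X 0 ^ t.1 * X 1 ^ t.2.1 * X 2 ^ t.2.2 : MvPolynomial (Fin 3) ℤ) =
      ∑ t ∈ T3 m, X 0 ^ t.1 * X 1 ^ (t.2.1 + 2 ^ k) * X 2 ^ (t.2.2 + 2 ^ k) := by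
    refine Finset.sum_nbij' (i := fun t => (t.1, t.2.1 - 2 ^ k, t.2.2 - 2 ^ k))
      (j := fun t => (t.1, t.2.1 + 2 ^ k, t.2.2 + 2 ^ k)) ?_ ?_ ?_ ?_ ?_
    · rintro ⟨a, b, c⟩ ht
      simp only [Finset.mem_filter, mem_T3] at ht
      obtain ⟨⟨hs, hx⟩, hlt⟩ := ht
      obtain ⟨hb, hc, hs', hx'⟩ := decomp hm hs hx hlt
      simp only [mem_T3]
      exact ⟨hs', hx'⟩
    · rintro ⟨a, b, c⟩ ht
      simp only [mem_T3] at ht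
      obtain ⟨hs, hx⟩ := ht
      obtain ⟨ha1, hb1, hc1, hs', hx'⟩ := comp (k := k) hm hs hx
      simp only [Finset.mem_filter, mem_T3]
      exact ⟨⟨hs', hx'⟩, by omega⟩
    · rintro ⟨a, b, c⟩ ht
      simp only [Finset.mem_filter, mem_T3] at ht
      obtain ⟨⟨hs, hx⟩, hlt⟩ := ht
      obtain ⟨hb, hc, -, -⟩ := decomp hm hs hx hlt
      dsimp only
      simp only [Prod.mk.injEq, true_and, and_true]
      omega
    · rintro ⟨a, b, c⟩ ht
      dsimp only
      simp only [Prod.mk.injEq, true_and, and_true]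
      omega
    · rintro ⟨a, b, c⟩ ht
      simp only [Finset.mem_filter, mem_T3] at ht
      obtain ⟨⟨hs, hx⟩, hlt⟩ := ht
      obtain ⟨hb, hc, -, -⟩ := decomp hm hs hx hlt
      dsimp only
      rw [Nat.sub_add_cancel hb, Nat.sub_add_cancel hc]
  have e1 : ∑ t ∈ ((T3 (2 ^ k + m)).filter (fun t => ¬ t.1 < 2 ^ k)).filter
        (fun t => t.2.1 < 2 ^ k),
        (X 0 ^ t.1 * X 1 ^ t.2.1 * X 2 ^ t.2.2 : MvPolynomial (Fin 3) ℤ) =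
      ∑ t ∈ T3 m, X 0 ^ (t.1 + 2 ^ k) * X 1 ^ t.2.1 * X 2 ^ (t.2.2 + 2 ^ k) := by
    refine Finset.sum_nbij' (i := fun t => (t.1 - 2 ^ k, t.2.1, t.2.2 - 2 ^ k))
      (j := fun t => (t.1 + 2 ^ k, t.2.1, t.2.2 + 2 ^ k)) ?_ ?_ ?_ ?_ ?_
    · rintro ⟨a, b, c⟩ ht
      simp only [Finset.mem_filter, mem_T3] at ht
      obtain ⟨⟨⟨hs, hx⟩, hq⟩, hlt⟩ := ht
      have hxr : b ^^^ c ^^^ a = 0 := by rw [← xor_rot b c a]; exact hx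
      obtain ⟨hc, ha, hs', hx'⟩ := decomp hm (by omega) hxr hlt
      simp only [mem_T3]
      refine ⟨by omega, ?_⟩
      rw [xor_rot b (c - 2 ^ k) (a - 2 ^ k)]
      exact hx'
    · rintro ⟨a, b, c⟩ ht
      simp only [mem_T3] at ht
      obtain ⟨hs, hx⟩ := ht
      have hxr : b ^^^ c ^^^ a = 0 := by rw [← xor_rot b c a]; exact hx
      obtain ⟨hb1, hc1, ha1, hs', hx'⟩ := comp (k := k) hm (by omega) hxr
      simp only [Finset.mem_filter, mem_T3]
      refine ⟨⟨⟨by omega, ?_⟩, by omega⟩, by omega⟩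
      rw [xor_rot b (c + 2 ^ k) (a + 2 ^ k)]
      exact hx'
    · rintro ⟨a, b, c⟩ ht
      simp only [Finset.mem_filter, mem_T3] at ht
      obtain ⟨⟨⟨hs, hx⟩, hq⟩, hlt⟩ := ht
      have hxr : b ^^^ c ^^^ a = 0 := by rw [← xor_rot b c a]; exact hx
      obtain ⟨hc, ha, -, -⟩ := decomp hm (by omega) hxr hlt
      dsimp only
      simp only [Prod.mk.injEq, true_and, and_true]
      omega
    · rintro ⟨a, b, c⟩ ht
      dsimp only
      simp only [Prod.mk.injEq, true_and, and_true]
      omega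
    · rintro ⟨a, b, c⟩ ht
      simp only [Finset.mem_filter, mem_T3] at ht
      obtain ⟨⟨⟨hs, hx⟩, hq⟩, hlt⟩ := ht
      have hxr : b ^^^ c ^^^ a = 0 := by rw [← xor_rot b c a]; exact hx
      obtain ⟨hc, ha, -, -⟩ := decomp hm (by omega) hxr hlt
      dsimp only
      rw [Nat.sub_add_cancel (by omega : 2 ^ k ≤ a), Nat.sub_add_cancel (by omega : 2 ^ k ≤ c)]
  have e2 : ∑ t ∈ ((T3 (2 ^ k + m)).filter (fun t => ¬ t.1 < 2 ^ k)).filter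
        (fun t => ¬ t.2.1 < 2 ^ k),
        (X 0 ^ t.1 * X 1 ^ t.2.1 * X 2 ^ t.2.2 : MvPolynomial (Fin 3) ℤ) =
      ∑ t ∈ T3 m, X 0 ^ (t.1 + 2 ^ k) * X 1 ^ (t.2.1 + 2 ^ k) * X 2 ^ t.2.2 := by
    refine Finset.sum_nbij' (i := fun t => (t.1 - 2 ^ k, t.2.1 - 2 ^ k, t.2.2))
      (j := fun t => (t.1 + 2 ^ k, t.2.1 + 2 ^ k, t.2.2)) ?_ ?_ ?_ ?_ ?_
    · rintro ⟨a, b, c⟩ ht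
      simp only [Finset.mem_filter, mem_T3] at ht
      obtain ⟨⟨⟨hs, hx⟩, hqa⟩, hqb⟩ := ht
      have hcs : c < 2 ^ k := small3 hm hs hx (by omega) (by omega)
      have hxr : c ^^^ a ^^^ b = 0 := by rw [xor_rot a b c]; exact hx
      obtain ⟨ha, hb, hs', hx'⟩ := decomp hm (by omega) hxr hcs
      simp only [mem_T3]
      refine ⟨by omega, ?_⟩
      rw [← xor_rot (a - 2 ^ k) (b - 2 ^ k) c]
      exact hx'
    · rintro ⟨a, b, c⟩ ht
      simp only [mem_T3] at ht
      obtain ⟨hs, hx⟩ := ht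
      have hxr : c ^^^ a ^^^ b = 0 := by rw [xor_rot a b c]; exact hx
      obtain ⟨hc1, ha1, hb1, hs', hx'⟩ := comp (k := k) hm (by omega) hxr
      simp only [Finset.mem_filter, mem_T3]
      refine ⟨⟨⟨by omega, ?_⟩, by omega⟩, by omega⟩
      rw [← xor_rot (a + 2 ^ k) (b + 2 ^ k) c]
      exact hx'
    · rintro ⟨a, b, c⟩ ht
      simp only [Finset.mem_filter, mem_T3] at ht
      obtain ⟨⟨⟨hs, hx⟩, hqa⟩, hqb⟩ := ht
      dsimp only
      simp only [Prod.mk.injEq, true_and, and_true]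
      omega
    · rintro ⟨a, b, c⟩ ht
      dsimp only
      simp only [Prod.mk.injEq, true_and, and_true]
      omega
    · rintro ⟨a, b, c⟩ ht
      simp only [Finset.mem_filter, mem_T3] at ht
      obtain ⟨⟨⟨hs, hx⟩, hqa⟩, hqb⟩ := ht
      dsimp only
      rw [Nat.sub_add_cancel (by omega : 2 ^ k ≤ a), Nat.sub_add_cancel (by omega : 2 ^ k ≤ b)]
  rw [e0, e1, e2]
  ring

theorem stmt_5 (k m : ℕ) (hm : m < 2 ^ k) :
    Ideal.Quotient.mk nimRel (nimPoly (2 ^ k + m)) =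
      Ideal.Quotient.mk nimRel
          (X 0 ^ (2 ^ k) * X 1 ^ (2 ^ k) + X 0 ^ (2 ^ k) * X 2 ^ (2 ^ k) +
            X 1 ^ (2 ^ k) * X 2 ^ (2 ^ k)) *
        Ideal.Quotient.mk nimRel (nimPoly m) := by
  rw [nim_mul k m hm, map_mul]
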